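/- For all natural numbers n, k, p with k ≥ 1 and 1 ≤ p < n, the polynomial identity A_{kn+p} = (A_p + 2) · A_{kn} + 2·A_p − A_{kn−p} holds in ℤ[X]. -/

import Mathlib

open Polynomial

/-- The sequence of integer polynomials `L 0 = 1`, `L 1 = X`,
`L (n+2) = X * L (n+1) - L n`. -/
noncomputable def L : ℕ → Polynomial ℤ
  | 0 => 1
  | 1 => X
  | n + 2 => X * L (n + 1) - L n

/-- The sequence of integer polynomials `A 0 = 0`, `A 1 = X - 2`,
`A n = L n - L (n-2) - 2` for `n ≥ 2`. -/
noncomputable def A : ℕ → Polynomial ℤ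
  | 0 => 0
  | 1 => X - 2
  | n + 2 => L (n + 2) - L n - 2

/-- Lucas-like sequence `Cc n = 2 cos (n θ)` where `X = 2 cos θ`. -/
noncomputable def Cc : ℕ → Polynomial ℤ
  | 0 => 2
  | 1 => X
  | n + 2 => X * Cc (n + 1) - Cc n

lemma C_eq_L (n : ℕ) : Cc (n + 2) = L (n + 2) - L n := by
  induction n using Nat.strong_induction_on with
  | _ n ih =>
    match n with
    | 0 => simp [Cc, L]; ring
    | 1 => simp [Cc, L]; ring
    | m + 2 =>
      have h1 := ih m (by omega)
      have h2 := ih (m + 1) (by omega)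
      show X * Cc (m + 3) - Cc (m + 2) = L (m + 4) - L (m + 2)
      rw [h1, h2]
      show X * (L (m + 3) - L (m + 1)) - (L (m + 2) - L m)
        = (X * L (m + 3) - L (m + 2)) - (X * L (m + 1) - L m)
      ring

lemma A_eq (n : ℕ) : A n = Cc n - 2 := by
  match n with
  | 0 => simp [A, Cc]
  | 1 => simp [A, Cc]
  | m + 2 => rw [C_eq_L]; show L (m + 2) - L m - 2 = _; ring

lemma C_prod (p : ℕ) : ∀ m, Cc (m + 2 * p) + Cc m = Cc p * Cc (m + p) := by
  induction p using Nat.strong_induction_on with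
  | _ p ih =>
    match p with
    | 0 => intro m; simp [Cc]; ring
    | 1 =>
      intro m
      have : m + 2 * 1 = m + 2 := by ring
      rw [this]
      show (X * Cc (m + 1) - Cc m) + Cc m = X * Cc (m + 1)
      ring
    | q + 2 =>
      intro m
      have h1 := ih q (by omega) (m + 2)
      have h2 := ih (q + 1) (by omega) (m + 1)
      have e1 : m + 2 + 2 * q = m + 2 * q + 2 := by ring
      have e2 : m + 1 + 2 * (q + 1) = m + 2 * q + 3 := by ring
      have e3 : m + 2 + q = m + q + 2 := by ring
      have e4 : m + 1 + (q + 1) = m + q + 2 := by ring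
      rw [e1, e3] at h1
      rw [e2, e4] at h2
      have e5 : m + 2 * (q + 2) = m + 2 * q + 4 := by ring
      have e6 : m + (q + 2) = m + q + 2 := by ring
      rw [e5, e6]
      have hC1 : Cc (m + 2 * q + 4) = X * Cc (m + 2 * q + 3) - Cc (m + 2 * q + 2) := rfl
      have hC2 : Cc (m + 2) = X * Cc (m + 1) - Cc m := rfl
      have hC3 : Cc (q + 2) = X * Cc (q + 1) - Cc q := rfl
      have hX := congrArg (X * ·) h2
      rw [hC1, hC3]
      linear_combination hX - h1 + hC2

theorem stmt_8 (n k p : ℕ) (hk : 1 ≤ k) (hp : 1 ≤ p) (hpn : p < n) :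
    A (k * n + p) = (A p + 2) * A (k * n) + 2 * A p - A (k * n - p) := by
  have hpm : p ≤ k * n := le_trans hpn.le (Nat.le_mul_of_pos_left n hk)
  obtain ⟨q, hq⟩ : ∃ q, k * n = q + p := ⟨k * n - p, by omega⟩
  have hsub : k * n - p = q := by omega
  have hadd : k * n + p = q + 2 * p := by omega
  rw [hsub, hadd, A_eq, A_eq, A_eq, A_eq, hq]
  have h := C_prod p q
  linear_combination h
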